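/- Let (D, B_0) be a dimaze. A set B of vertices is linkable onto B_0 (by disjoint directed paths with terminal vertex set exactly B_0) if and only if in the converted bimaze (D, B_0)^⋆ the set V \ B is m_0-matchable onto (V \ B_0)^⋆. -/

import Mathlib

open Set


/-- A finite directed path/walk or a ray, encoded by a vertex function and a length:
the number of edges, `⊤` for a ray. Only indices `≤ len` are meaningful. -/
structure DiWalk (V : Type*) where
  vtx : ℕ → V
  len : ℕ∞

namespace DiWalk

variable {V : Type*} (w : DiWalk V)

/-- The vertices of the walk. -/
def support : Set V := {v | ∃ i : ℕ, (i : ℕ∞) ≤ w.len ∧ w.vtx i = v}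

/-- The directed edges of the walk. -/
def edges : Set (V × V) := {e | ∃ i : ℕ, (i : ℕ∞) + 1 ≤ w.len ∧ e = (w.vtx i, w.vtx (i + 1))}

/-- The initial vertex. -/
def Ini : V := w.vtx 0

/-- The terminal vertex (meaningful for finite walks). -/
def Ter : V := w.vtx w.len.toNat

/-- `w` is a ray, i.e. one-way infinite. -/
def IsRay : Prop := w.len = ⊤

/-- `w` is a (finite) directed path or a directed ray in the digraph `D`: consecutive
vertices are joined by edges of `D` and no vertex is repeated. -/
def IsPathIn (D : V → V → Prop) : Prop :=
  (∀ i : ℕ, (i : ℕ∞) + 1 ≤ w.len → D (w.vtx i) (w.vtx (i + 1))) ∧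
  (∀ i j : ℕ, (i : ℕ∞) ≤ w.len → (j : ℕ∞) ≤ w.len → w.vtx i = w.vtx j → i = j)

end DiWalk

variable {V : Type*}

/-- The vertex set of a family of walks. -/
def VSet (Q : Set (DiWalk V)) : Set V := ⋃ q ∈ Q, q.support

/-- The edge set of a family of walks. -/
def ESet (Q : Set (DiWalk V)) : Set (V × V) := ⋃ q ∈ Q, q.edges

/-- The set of initial vertices of a family of walks. -/
def IniSet (Q : Set (DiWalk V)) : Set V := DiWalk.Ini '' Q

/-- The set of terminal vertices of the finite members of a family of walks. -/
def TerSet (Q : Set (DiWalk V)) : Set V := {v | ∃ q ∈ Q, ¬ q.IsRay ∧ q.Ter = v}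

/-- The members of `Q` are pairwise vertex-disjoint. -/
def PairwiseDisjointWalks (Q : Set (DiWalk V)) : Prop :=
  ∀ p ∈ Q, ∀ q ∈ Q, p ≠ q → Disjoint p.support q.support

/-- `Q` is a set of pairwise disjoint directed paths or rays in `D`. -/
def IsPathSystem (D : V → V → Prop) (Q : Set (DiWalk V)) : Prop :=
  (∀ q ∈ Q, q.IsPathIn D) ∧ PairwiseDisjointWalks Q

/-- A linkage in the dimaze `(D, B0)`: a set of pairwise disjoint finite directed paths
ending in `B0`. -/
def IsLinkage (D : V → V → Prop) (B0 : Set V) (Q : Set (DiWalk V)) : Prop :=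
  IsPathSystem D Q ∧ ∀ q ∈ Q, ¬ q.IsRay ∧ q.Ter ∈ B0

/-- `I` is linkable to `B0` in `(D, B0)`. -/
def Linkable (D : V → V → Prop) (B0 : Set V) (I : Set V) : Prop :=
  ∃ Q, IsLinkage D B0 Q ∧ IniSet Q = I

/-- `I` is linkable onto `B0`: some linkage from `I` has terminal vertex set exactly `B0`. -/
def LinkableOnto (D : V → V → Prop) (B0 : Set V) (I : Set V) : Prop :=
  ∃ Q, IsLinkage D B0 Q ∧ IniSet Q = I ∧ TerSet Q = B0

/-- `B0` is a set of sinks of `D`. -/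
def IsDimaze (D : V → V → Prop) (B0 : Set V) : Prop := ∀ b ∈ B0, ∀ v, ¬ D b v

/-- `v` is the centre of a linking fan: infinitely many non-trivial directed paths to `B0`
from `v`, pairwise meeting only in `v`. -/
def IsFanCentre (D : V → V → Prop) (B0 : Set V) (v : V) : Prop :=
  ∃ P : Set (DiWalk V), P.Infinite ∧
    (∀ p ∈ P, p.IsPathIn D ∧ ¬ p.IsRay ∧ 1 ≤ p.len ∧ p.Ini = v ∧ p.Ter ∈ B0) ∧
    (∀ p ∈ P, ∀ q ∈ P, p ≠ q → p.support ∩ q.support ⊆ {v})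

/-- The ray `R` is the spine of an outgoing comb with teeth ending in `B0`: there are
infinitely many pairwise disjoint non-trivial paths from distinct vertices of `R` to `B0`,
each meeting `R` exactly in its initial vertex. -/
def IsSpine (D : V → V → Prop) (B0 : Set V) (R : DiWalk V) : Prop :=
  R.IsPathIn D ∧ R.IsRay ∧
  ∃ P : Set (DiWalk V), P.Infinite ∧
    (∀ p ∈ P, p.IsPathIn D ∧ ¬ p.IsRay ∧ 1 ≤ p.len ∧ p.Ini ∈ R.support ∧ p.Ter ∈ B0 ∧
      p.support ∩ R.support = {p.Ini}) ∧
    PairwiseDisjointWalks P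

/-- `(D, B0)` contains no subdivision of an outgoing comb. -/
def COFree (D : V → V → Prop) (B0 : Set V) : Prop := ¬ ∃ R, IsSpine D B0 R

/-- `(D, B0)` contains no subdivision of a linking fan. -/
def FanFree (D : V → V → Prop) (B0 : Set V) : Prop := ¬ ∃ v, IsFanCentre D B0 v

/-- A topological path in `(D, B0)`. -/
def IsTopPath (D : V → V → Prop) (B0 : Set V) (w : DiWalk V) : Prop :=
  w.IsPathIn D ∧
    ((¬ w.IsRay ∧ w.Ter ∈ B0) ∨ (¬ w.IsRay ∧ IsFanCentre D B0 w.Ter) ∨ IsSpine D B0 w)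

/-- `I` is topologically linkable in `(D, B0)`. -/
def TopLinkable (D : V → V → Prop) (B0 : Set V) (I : Set V) : Prop :=
  ∃ Q : Set (DiWalk V), (∀ q ∈ Q, IsTopPath D B0 q) ∧ PairwiseDisjointWalks Q ∧ IniSet Q = I
section Bipartite

variable {V W : Type*}

/-- `m` is a matching in the bipartite graph with edge set `E ⊆ V × W`. -/
def IsBipMatching (E m : Set (V × W)) : Prop :=
  m ⊆ E ∧ ∀ p ∈ m, ∀ q ∈ m, (p.1 = q.1 ∨ p.2 = q.2) → p = q

/-- `I ⊆ V` is matchable in the bipartite graph with edge set `E`. -/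
def Matchable (E : Set (V × W)) (I : Set V) : Prop :=
  ∃ m, IsBipMatching E m ∧ Prod.fst '' m = I

/-- One step along an edge of `F` in the bipartite graph, on vertex type `V ⊕ W`. -/
def bipStep (F : Set (V × W)) : (V ⊕ W) → (V ⊕ W) → Prop := fun a b =>
  match a, b with
  | Sum.inl v, Sum.inr w => (v, w) ∈ F
  | Sum.inr w, Sum.inl v => (v, w) ∈ F
  | _, _ => False

/-- Every connected component of the bipartite graph with edge set `F` is finite. -/
def FiniteComponents (F : Set (V × W)) : Prop :=
  ∀ x : V ⊕ W, {y | Relation.ReflTransGen (bipStep F) x y}.Finite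

/-- `m` is an `m0`-matching: a matching such that every component of `m0 ∪ m` is finite. -/
def IsM0Matching (E m0 m : Set (V × W)) : Prop :=
  IsBipMatching E m ∧ FiniteComponents (m0 ∪ m)

/-- `I` is `m0`-matchable. -/
def M0Matchable (E m0 : Set (V × W)) (I : Set V) : Prop :=
  ∃ m, IsM0Matching E m0 m ∧ Prod.fst '' m = I

/-- `I` is `m0`-matchable onto `W'`. -/
def M0MatchableOnto (E m0 : Set (V × W)) (I : Set V) (W' : Set W) : Prop :=
  ∃ m, IsM0Matching E m0 m ∧ Prod.fst '' m = I ∧ Prod.snd '' m = W'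

end Bipartite

section Star

variable {V : Type*}

/-- The edge set of the converted bimaze of the dimaze `(D, B0)`: the right class is
`{v ∣ v ∉ B0}` (representing `(V \ B0)⋆`) and the edges are the identity matching
together with `v u⋆` for every edge `(u, v)` of `D`. -/
def starEdges (D : V → V → Prop) (B0 : Set V) : Set (V × V) :=
  {p | (p.1 = p.2 ∧ p.2 ∉ B0) ∨ (D p.2 p.1 ∧ p.2 ∉ B0)}

/-- The identity matching of the converted bimaze. -/
def starM0 (B0 : Set V) : Set (V × V) := {p | p.1 = p.2 ∧ p.1 ∉ B0}

end Star


section Aux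

open Classical

variable {V : Type*}

/-- Reachable set is contained in any finite closed superset. -/
lemma reach_subset_of_closed {W : Type*} (F : Set (V × W)) (T : Set (V ⊕ W)) (x : V ⊕ W)
    (hx : x ∈ T) (hcl : ∀ a ∈ T, ∀ b, bipStep F a b → b ∈ T) :
    {y | Relation.ReflTransGen (bipStep F) x y} ⊆ T := by
  intro y hy
  induction hy with
  | refl => exact hx
  | tail _ h2 ih => exact hcl _ ih _ h2

lemma forward_dir (D : V → V → Prop) (B0 : Set V) (hDim : IsDimaze D B0) (B : Set V)
    (h : LinkableOnto D B0 B) :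
    M0MatchableOnto (starEdges D B0) (starM0 B0) (Set.univ \ B) {v | v ∉ B0} := by
  obtain ⟨Q, ⟨⟨hpaths, hdisj⟩, hfin⟩, hIni, hTer⟩ := h
  set k : DiWalk V → ℕ := fun q => q.len.toNat with hk
  have hlen : ∀ q ∈ Q, q.len = (k q : ℕ∞) := fun q hq =>
    (ENat.coe_toNat (by simpa [DiWalk.IsRay] using (hfin q hq).1)).symm
  have hedge : ∀ q ∈ Q, ∀ i : ℕ, i < k q → D (q.vtx i) (q.vtx (i+1)) := by
    intro q hq i hi
    apply (hpaths q hq).1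
    rw [hlen q hq]
    exact_mod_cast hi
  have hinj : ∀ q ∈ Q, ∀ i j, i ≤ k q → j ≤ k q → q.vtx i = q.vtx j → i = j := by
    intro q hq i j hi hj hv
    exact (hpaths q hq).2 i j (by rw [hlen q hq]; exact_mod_cast hi)
      (by rw [hlen q hq]; exact_mod_cast hj) hv
  have hsupp : ∀ q ∈ Q, ∀ i, i ≤ k q → q.vtx i ∈ q.support := by
    intro q hq i hi
    exact ⟨i, by rw [hlen q hq]; exact_mod_cast hi, rfl⟩
  have hsupp' : ∀ q ∈ Q, ∀ v ∈ q.support, ∃ i, i ≤ k q ∧ q.vtx i = v := by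
    rintro q hq v ⟨i, hi, he⟩
    refine ⟨i, ?_, he⟩
    rw [hlen q hq] at hi
    exact_mod_cast hi
  have hterm : ∀ q ∈ Q, q.vtx (k q) ∈ B0 := fun q hq => (hfin q hq).2
  have hnotB0 : ∀ q ∈ Q, ∀ i, i < k q → q.vtx i ∉ B0 :=
    fun q hq i hi hB => hDim _ hB _ (hedge q hq i hi)
  have hsame : ∀ q ∈ Q, ∀ q' ∈ Q, ∀ i j, i ≤ k q → j ≤ k q' → q.vtx i = q'.vtx j →
      q = q' ∧ i = j := by
    intro q hq q' hq' i j hi hj hv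
    have hqq : q = q' := by
      by_contra hne
      exact (hdisj q hq q' hq' hne).ne_of_mem (hsupp q hq i hi) (hsupp q' hq' j hj) hv
    subst hqq
    exact ⟨rfl, hinj q hq i j hi hj hv⟩
  have hmemV : ∀ v, v ∈ VSet Q ↔ ∃ q ∈ Q, ∃ i, i ≤ k q ∧ q.vtx i = v := by
    intro v
    constructor
    · intro hv
      simp only [VSet, Set.mem_iUnion] at hv
      obtain ⟨q, hq, hs⟩ := hv
      exact ⟨q, hq, hsupp' q hq v hs⟩
    · rintro ⟨q, hq, i, hi, rfl⟩
      exact Set.mem_biUnion hq (hsupp q hq i hi)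
  have hB0sub : B0 ⊆ VSet Q := by
    rw [← hTer]
    rintro v ⟨q, hq, -, rfl⟩
    exact Set.mem_biUnion hq (hsupp q hq (k q) le_rfl)
  have hIni' : ∀ q ∈ Q, q.vtx 0 ∈ B := by
    intro q hq
    rw [← hIni]
    exact ⟨q, hq, rfl⟩
  have hBsub : B ⊆ VSet Q := by
    rw [← hIni]
    rintro v ⟨q, hq, rfl⟩
    exact Set.mem_biUnion hq (hsupp q hq 0 (Nat.zero_le _))
  -- the matching
  set m : Set (V × V) :=
    {p | (∃ q ∈ Q, ∃ i : ℕ, i < k q ∧ p = (q.vtx (i+1), q.vtx i)) ∨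
      (p.1 = p.2 ∧ p.1 ∉ VSet Q)} with hm
  have hnotB : ∀ q ∈ Q, ∀ i, i < k q → q.vtx (i+1) ∉ B := by
    intro q hq i hi hB
    rw [← hIni] at hB
    obtain ⟨q', hq', he⟩ := hB
    obtain ⟨hqq, hij⟩ := hsame q' hq' q hq 0 (i+1) (Nat.zero_le _) hi he
    omega
  refine ⟨m, ⟨⟨?_, ?_⟩, ?_⟩, ?_, ?_⟩
  · -- m ⊆ starEdges
    rintro ⟨v, u⟩ (⟨q, hq, i, hi, hp⟩ | ⟨h1, h2⟩)
    · rw [Prod.mk.injEq] at hp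
      obtain ⟨rfl, rfl⟩ := hp
      exact Or.inr ⟨hedge q hq i hi, hnotB0 q hq i hi⟩
    · exact Or.inl ⟨h1, fun hB0 => h2 (h1 ▸ hB0sub (h1 ▸ hB0))⟩
  · -- matching
    rintro ⟨v, u⟩ (⟨q, hq, i, hi, hp⟩ | ⟨h1, h2⟩) ⟨v', u'⟩
      (⟨q', hq', j, hj, hp'⟩ | ⟨h1', h2'⟩) hco
    · rw [Prod.mk.injEq] at hp hp'
      obtain ⟨rfl, rfl⟩ := hp
      obtain ⟨rfl, rfl⟩ := hp'
      rcases hco with hco | hco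
      · obtain ⟨rfl, hij⟩ := hsame q hq q' hq' (i+1) (j+1) hi hj hco
        simp only [Prod.mk.injEq]
        exact ⟨hco, by rw [Nat.add_right_cancel hij]⟩
      · obtain ⟨rfl, rfl⟩ := hsame q hq q' hq' i j (Nat.le_of_lt hi) (Nat.le_of_lt hj) hco
        rfl
    · exfalso
      rw [Prod.mk.injEq] at hp
      obtain ⟨rfl, rfl⟩ := hp
      simp only at h1' hco
      rcases hco with hco | hco
      · exact h2' (hco ▸ (hmemV _).2 ⟨q, hq, i+1, hi, rfl⟩)
      · exact h2' (by rw [h1', ← hco]; exact (hmemV _).2 ⟨q, hq, i, Nat.le_of_lt hi, rfl⟩)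
    · exfalso
      rw [Prod.mk.injEq] at hp'
      obtain ⟨rfl, rfl⟩ := hp'
      simp only at h1 hco
      rcases hco with hco | hco
      · exact h2 (hco ▸ (hmemV _).2 ⟨q', hq', j+1, hj, rfl⟩)
      · exact h2 (by rw [h1, hco]; exact (hmemV _).2 ⟨q', hq', j, Nat.le_of_lt hj, rfl⟩)
    · simp only at h1 h1' hco ⊢
      subst h1
      subst h1'
      rcases hco with rfl | rfl <;> rfl
  · -- finite components
    intro x
    have key : ∀ v, v ∈ VSet Q → ∃ T : Set (V ⊕ V), T.Finite ∧ Sum.inl v ∈ T ∧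
        (v ∉ B0 → Sum.inr v ∈ T) ∧
        (∀ a ∈ T, ∀ b, bipStep (starM0 B0 ∪ m) a b → b ∈ T) := by
      intro v hv
      obtain ⟨q, hq, i0, hi0, rfl⟩ := (hmemV v).1 hv
      refine ⟨(fun i => Sum.inl (q.vtx i)) '' Set.Iic (k q) ∪
        (fun i => Sum.inr (q.vtx i)) '' Set.Iio (k q), ?_, ?_, ?_, ?_⟩
      · exact ((Set.finite_Iic _).image _).union ((Set.finite_Iio _).image _)
      · exact Or.inl ⟨i0, hi0, rfl⟩
      · intro hvB0
        refine Or.inr ⟨i0, ?_, rfl⟩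
        rcases Nat.lt_or_ge i0 (k q) with h | h
        · exact h
        · exact absurd (le_antisymm hi0 h ▸ hterm q hq) hvB0
      · rintro a (⟨i, hi, rfl⟩ | ⟨i, hi, rfl⟩) b hb
        · cases b with
          | inl w => exact absurd hb (by simp [bipStep])
          | inr w => ?_
          -- from inl (vtx i) to inr w
          simp only [bipStep] at hb
          rcases hb with ⟨h1, h2⟩ | (⟨q', hq', j, hj, hp⟩ | ⟨h1, h2⟩)
          · -- m0 edge
            simp only at h1 h2
            refine Or.inr ⟨i, ?_, by simp only [h1]⟩
            rcases Nat.lt_or_ge i (k q) with h | h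
            · exact h
            · exact absurd ((le_antisymm hi h) ▸ hterm q hq) (h1 ▸ h2)
          · rw [Prod.mk.injEq] at hp
            obtain ⟨he1, rfl⟩ := hp
            obtain ⟨rfl, hij⟩ := hsame q hq q' hq' i (j+1) hi hj he1
            exact Or.inr ⟨j, Set.mem_Iio.mpr (by omega), rfl⟩
          · exact absurd ((hmemV _).2 ⟨q, hq, i, hi, rfl⟩) h2
        · cases b with
          | inr w => exact absurd hb (by simp [bipStep])
          | inl w => ?_
          -- from inr (vtx i), i < k q, to inl w
          simp only [bipStep] at hb
          rcases hb with ⟨h1, h2⟩ | (⟨q', hq', j, hj, hp⟩ | ⟨h1, h2⟩)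
          · simp only at h1
            exact Or.inl ⟨i, Set.mem_Iic.mpr (Nat.le_of_lt (Set.mem_Iio.mp hi)), by simp only [h1]⟩
          · rw [Prod.mk.injEq] at hp
            obtain ⟨rfl, he2⟩ := hp
            obtain ⟨rfl, rfl⟩ := hsame q hq q' hq' i j (Nat.le_of_lt hi)
              (Nat.le_of_lt hj) he2
            exact Or.inl ⟨i+1, hi, rfl⟩
          · simp only at h1
            exact absurd ((hmemV _).2 ⟨q, hq, i, Nat.le_of_lt hi, rfl⟩) (h1 ▸ h2)
    have hiso : ∀ v, v ∉ VSet Q → ∀ a ∈ ({Sum.inl v, Sum.inr v} : Set (V ⊕ V)),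
        ∀ b, bipStep (starM0 B0 ∪ m) a b → b ∈ ({Sum.inl v, Sum.inr v} : Set (V ⊕ V)) := by
      intro v hv a ha b hb
      rcases ha with rfl | ha
      · cases b with
        | inl w => exact absurd hb (by simp [bipStep])
        | inr w =>
          simp only [bipStep] at hb
          rcases hb with ⟨h1, h2⟩ | (⟨q, hq, i, hi, hp⟩ | ⟨h1, h2⟩)
          · simp only at h1; subst h1; exact Or.inr rfl
          · rw [Prod.mk.injEq] at hp
            exact absurd ((hmemV _).2 ⟨q, hq, i+1, hi, hp.1.symm⟩) hv
          · simp only at h1; subst h1; exact Or.inr rfl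
      · rw [Set.mem_singleton_iff] at ha
        subst ha
        cases b with
        | inr w => exact absurd hb (by simp [bipStep])
        | inl w =>
          simp only [bipStep] at hb
          rcases hb with ⟨h1, h2⟩ | (⟨q, hq, i, hi, hp⟩ | ⟨h1, h2⟩)
          · simp only at h1; subst h1; exact Or.inl rfl
          · rw [Prod.mk.injEq] at hp
            exact absurd ((hmemV _).2 ⟨q, hq, i, Nat.le_of_lt hi, hp.2.symm⟩) hv
          · simp only at h1; subst h1; exact Or.inl rfl
    -- case on x
    cases x with
    | inl v =>
      by_cases hv : v ∈ VSet Q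
      · obtain ⟨T, hTfin, hT1, _, hTcl⟩ := key v hv
        exact hTfin.subset (reach_subset_of_closed _ T _ hT1 hTcl)
      · exact (Set.toFinite {Sum.inl v, Sum.inr v}).subset
          (reach_subset_of_closed _ _ _ (Or.inl rfl) (hiso v hv))
    | inr v =>
      by_cases hvB0 : v ∈ B0
      · -- inr v isolated
        refine (Set.finite_singleton (Sum.inr v)).subset
          (reach_subset_of_closed _ {Sum.inr v} _ rfl ?_)
        rintro a rfl b hb
        cases b with
        | inr w => exact absurd hb (by simp [bipStep])
        | inl w =>
          exfalso
          simp only [bipStep] at hb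
          rcases hb with ⟨h1, h2⟩ | (⟨q, hq, i, hi, hp⟩ | ⟨h1, h2⟩)
          · exact h2 (h1 ▸ hvB0)
          · rw [Prod.mk.injEq] at hp
            exact hnotB0 q hq i hi (hp.2 ▸ hvB0)
          · simp only at h1 h2
            exact h2 (h1 ▸ hB0sub hvB0)
      · by_cases hv : v ∈ VSet Q
        · obtain ⟨T, hTfin, _, hT2, hTcl⟩ := key v hv
          exact hTfin.subset (reach_subset_of_closed _ T _ (hT2 hvB0) hTcl)
        · exact (Set.toFinite {Sum.inl v, Sum.inr v}).subset
            (reach_subset_of_closed _ _ _ (Or.inr rfl) (hiso v hv))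
  · -- fst '' m = univ \ B
    ext v
    constructor
    · rintro ⟨⟨v', u⟩, (⟨q, hq, i, hi, hp⟩ | ⟨h1, h2⟩), rfl⟩
      · rw [Prod.mk.injEq] at hp
        obtain ⟨rfl, rfl⟩ := hp
        exact ⟨trivial, hnotB q hq i hi⟩
      · exact ⟨trivial, fun hB => h2 (hBsub hB)⟩
    · rintro ⟨-, hvB⟩
      by_cases hv : v ∈ VSet Q
      · obtain ⟨q, hq, i, hi, rfl⟩ := (hmemV v).1 hv
        have hi0 : i ≠ 0 := by
          rintro rfl
          exact hvB (hIni' q hq)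
        obtain ⟨j, rfl⟩ := Nat.exists_eq_succ_of_ne_zero hi0
        exact ⟨(q.vtx (j+1), q.vtx j), Or.inl ⟨q, hq, j, hi, rfl⟩, rfl⟩
      · exact ⟨(v, v), Or.inr ⟨rfl, hv⟩, rfl⟩
  · -- snd '' m = {v | v ∉ B0}
    ext u
    constructor
    · rintro ⟨⟨v, u'⟩, (⟨q, hq, i, hi, hp⟩ | ⟨h1, h2⟩), rfl⟩
      · rw [Prod.mk.injEq] at hp
        obtain ⟨rfl, rfl⟩ := hp
        exact hnotB0 q hq i hi
      · simp only at h1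
        exact fun hB0 => h2 (hB0sub (show v ∈ B0 by rw [h1]; exact hB0))
    · intro hu
      by_cases hv : u ∈ VSet Q
      · obtain ⟨q, hq, i, hi, rfl⟩ := (hmemV u).1 hv
        have hik : i < k q := by
          rcases Nat.lt_or_ge i (k q) with h | h
          · exact h
          · exact absurd (le_antisymm hi h ▸ hterm q hq) hu
        exact ⟨(q.vtx (i+1), q.vtx i), Or.inl ⟨q, hq, i, hik, rfl⟩, rfl⟩
      · exact ⟨(u, u), Or.inr ⟨rfl, hv⟩, rfl⟩

end Aux


section Aux2

variable {V : Type*}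

open Classical in
/-- Iterate `s` starting at `b`, freezing once inside `S`. -/
noncomputable def iterStop (s : V → V) (S : Set V) (b : V) : ℕ → V
  | 0 => b
  | (i+1) => if iterStop s S b i ∈ S then iterStop s S b i else s (iterStop s S b i)

lemma backward_dir (D : V → V → Prop) (B0 : Set V) (B : Set V)
    (h : M0MatchableOnto (starEdges D B0) (starM0 B0) (Set.univ \ B) {v | v ∉ B0}) :
    LinkableOnto D B0 B := by
  classical
  obtain ⟨m, ⟨⟨hsub, hmatch⟩, hcomp⟩, hfst, hsnd⟩ := h
  have hmE : ∀ v u, (v, u) ∈ m → (v = u ∨ D u v) ∧ u ∉ B0 := by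
    intro v u hvu
    rcases hsub hvu with ⟨h1, h2⟩ | ⟨h1, h2⟩
    · exact ⟨Or.inl h1, h2⟩
    · exact ⟨Or.inr h1, h2⟩
  have hm1 : ∀ {v u u' : V}, (v, u) ∈ m → (v, u') ∈ m → u = u' := by
    intro v u u' h h'
    have := hmatch _ h _ h' (Or.inl rfl)
    exact ((Prod.mk.injEq _ _ _ _).mp this).2
  have hm2 : ∀ {v v' u : V}, (v, u) ∈ m → (v', u) ∈ m → v = v' := by
    intro v v' u h h'
    have := hmatch _ h _ h' (Or.inr rfl)
    exact ((Prod.mk.injEq _ _ _ _).mp this).1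
  have hleft : ∀ v, v ∉ B → ∃ u, (v, u) ∈ m := by
    intro v hv
    have hmem : v ∈ Prod.fst '' m := by rw [hfst]; exact ⟨trivial, hv⟩
    obtain ⟨⟨a, c⟩, hab, he⟩ := hmem
    exact ⟨c, by rwa [← he]⟩
  have hnotfst : ∀ v ∈ B, ∀ u, (v, u) ∉ m := by
    intro v hv u hvu
    have hmem : v ∈ Prod.fst '' m := ⟨(v, u), hvu, rfl⟩
    rw [hfst] at hmem
    exact hmem.2 hv
  have hright : ∀ u, u ∉ B0 → ∃ v, (v, u) ∈ m := by
    intro u hu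
    have hmem : u ∈ Prod.snd '' m := by rw [hsnd]; exact hu
    obtain ⟨⟨a, c⟩, hab, he⟩ := hmem
    exact ⟨a, by rwa [← he]⟩
  have hnotsnd : ∀ u ∈ B0, ∀ v, (v, u) ∉ m := by
    intro u hu v hvu
    have hmem : u ∈ Prod.snd '' m := ⟨(v, u), hvu, rfl⟩
    rw [hsnd] at hmem
    exact hmem hu
  set succ : V → V := fun u => if h : ∃ v, (v, u) ∈ m then h.choose else u with hsuccdef
  have hsucc : ∀ u, u ∉ B0 → (succ u, u) ∈ m := by
    intro u hu
    have h := hright u hu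
    simp only [hsuccdef, dif_pos h]
    exact h.choose_spec
  set f : V → ℕ → V := fun b => iterStop succ B0 b with hfdef
  have hf0 : ∀ b, f b 0 = b := fun _ => rfl
  have hfs : ∀ b i, f b i ∉ B0 → f b (i+1) = succ (f b i) := by
    intro b i hi
    simp only [hfdef, iterStop, if_neg hi]
    exact if_neg hi
  have hfstep : ∀ b i, f b i ∉ B0 → (f b (i+1), f b i) ∈ m := by
    intro b i hi
    rw [hfs b i hi]
    exact hsucc _ hi
  have hinj : ∀ i : ℕ, ∀ b ∈ B, ∀ b' ∈ B, ∀ j : ℕ,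
      (∀ t, t < i → f b t ∉ B0) → (∀ t, t < j → f b' t ∉ B0) →
      f b i = f b' j → i = j ∧ b = b' := by
    intro i
    induction i with
    | zero =>
      intro b hb b' hb' j h1 h2 he
      cases j with
      | zero => exact ⟨rfl, by rw [← hf0 b, ← hf0 b', he]⟩
      | succ j' =>
        exfalso
        have hm' : (f b' (j'+1), f b' j') ∈ m := hfstep b' j' (h2 j' (Nat.lt_succ_self _))
        rw [← he, hf0] at hm'
        exact hnotfst b hb _ hm'
    | succ i' ih =>
      intro b hb b' hb' j h1 h2 he
      cases j with
      | zero =>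
        exfalso
        have hm' : (f b (i'+1), f b i') ∈ m := hfstep b i' (h1 i' (Nat.lt_succ_self _))
        rw [he, hf0] at hm'
        exact hnotfst b' hb' _ hm'
      | succ j' =>
        have hma : (f b (i'+1), f b i') ∈ m := hfstep b i' (h1 i' (Nat.lt_succ_self _))
        have hmb : (f b' (j'+1), f b' j') ∈ m := hfstep b' j' (h2 j' (Nat.lt_succ_self _))
        rw [he] at hma
        have he' : f b i' = f b' j' := hm1 hma hmb
        obtain ⟨hij, hbb⟩ := ih b hb b' hb' j' (fun t ht => h1 t (Nat.lt_succ_of_lt ht))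
          (fun t ht => h2 t (Nat.lt_succ_of_lt ht)) he'
        exact ⟨by omega, hbb⟩
  have hhit : ∀ b ∈ B, ∃ n, f b n ∈ B0 := by
    intro b hb
    by_contra hno
    push_neg at hno
    have hreach : ∀ i, Relation.ReflTransGen (bipStep (starM0 B0 ∪ m))
        (Sum.inl b) (Sum.inl (f b i)) := by
      intro i
      induction i with
      | zero => exact .refl
      | succ i ih =>
        have h1 : bipStep (starM0 B0 ∪ m) (Sum.inl (f b i)) (Sum.inr (f b i)) :=
          Or.inl ⟨rfl, hno i⟩
        have h2 : bipStep (starM0 B0 ∪ m) (Sum.inr (f b i)) (Sum.inl (f b (i+1))) :=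
          Or.inr (hfstep b i (hno i))
        exact (ih.tail h1).tail h2
    have hinf : {y | Relation.ReflTransGen (bipStep (starM0 B0 ∪ m))
        (Sum.inl b) y}.Infinite := by
      apply Set.infinite_of_injective_forall_mem
        (f := fun i : ℕ => (Sum.inl (f b i) : V ⊕ V))
      · intro i j he
        simp only [Sum.inl.injEq] at he
        exact (hinj i b hb b hb j (fun t _ => hno t) (fun t _ => hno t) he).1
      · exact fun i => hreach i
    exact hinf (hcomp (Sum.inl b))
  have hnbeq : ∀ b (hb : b ∈ B), ∃ n : ℕ, f b n ∈ B0 ∧ (∀ t, t < n → f b t ∉ B0) := by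
    intro b hb
    exact ⟨Nat.find (hhit b hb), Nat.find_spec (hhit b hb),
      fun t ht => Nat.find_min (hhit b hb) ht⟩
  choose! nb hnb1 hnb2 using hnbeq
  set wb : V → DiWalk V := fun b => ⟨f b, (nb b : ℕ∞)⟩ with hwbdef
  have hlenw : ∀ b, (wb b).len = (nb b : ℕ∞) := fun _ => rfl
  have hnotray : ∀ b, ¬ (wb b).IsRay := by
    intro b hray
    exact (ENat.coe_ne_top (nb b)) hray
  have hter : ∀ b ∈ B, (wb b).Ter = f b (nb b) := by
    intro b hb
    show f b (((nb b : ℕ∞)).toNat) = f b (nb b)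
    rw [ENat.toNat_coe]
  have hsupmem : ∀ b v, v ∈ (wb b).support ↔ ∃ i, i ≤ nb b ∧ f b i = v := by
    intro b v
    constructor
    · rintro ⟨i, hi, rfl⟩
      rw [hlenw] at hi
      exact ⟨i, by exact_mod_cast hi, rfl⟩
    · rintro ⟨i, hi, rfl⟩
      refine ⟨i, ?_, rfl⟩
      rw [hlenw]
      exact_mod_cast hi
  refine ⟨wb '' B, ⟨⟨?_, ?_⟩, ?_⟩, ?_, ?_⟩
  · -- paths
    rintro q ⟨b, hb, rfl⟩
    constructor
    · intro i hi
      rw [hlenw] at hi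
      have hi' : i < nb b := by
        have : ((i+1 : ℕ) : ℕ∞) ≤ (nb b : ℕ∞) := by push_cast; exact_mod_cast hi
        exact_mod_cast this
      have hm' := hfstep b i (hnb2 b hb i hi')
      rcases (hmE _ _ hm').1 with he | hD
      · exfalso
        have := hinj (i+1) b hb b hb i (fun t ht => hnb2 b hb t (by omega))
          (fun t ht => hnb2 b hb t (by omega)) he
        omega
      · exact hD
    · intro i j hi hj he
      rw [hlenw] at hi hj
      have hi' : i ≤ nb b := by exact_mod_cast hi
      have hj' : j ≤ nb b := by exact_mod_cast hj
      exact (hinj i b hb b hb j (fun t ht => hnb2 b hb t (by omega))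
        (fun t ht => hnb2 b hb t (by omega)) he).1
  · -- pairwise disjoint
    rintro p ⟨b, hb, rfl⟩ q ⟨b', hb', rfl⟩ hne
    rw [Set.disjoint_left]
    intro v hv1 hv2
    obtain ⟨i, hi, rfl⟩ := (hsupmem b v).1 hv1
    obtain ⟨j, hj, he⟩ := (hsupmem b' _).1 hv2
    obtain ⟨-, rfl⟩ := hinj i b hb b' hb' j (fun t ht => hnb2 b hb t (by omega))
      (fun t ht => hnb2 b' hb' t (by omega)) he.symm
    exact hne rfl
  · -- finite, terminal in B0
    rintro q ⟨b, hb, rfl⟩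
    exact ⟨hnotray b, by rw [hter b hb]; exact hnb1 b hb⟩
  · -- IniSet = B
    ext v
    constructor
    · rintro ⟨q, ⟨b, hb, rfl⟩, rfl⟩
      exact hb
    · intro hv
      exact ⟨wb v, ⟨v, hv, rfl⟩, rfl⟩
  · -- TerSet = B0
    ext v
    constructor
    · rintro ⟨q, ⟨b, hb, rfl⟩, -, rfl⟩
      rw [hter b hb]
      exact hnb1 b hb
    · intro hv
      -- backward construction
      set pred : V → V := fun x => if h : ∃ u, (x, u) ∈ m then h.choose else x with hpreddef
      have hpred : ∀ x, x ∉ B → (x, pred x) ∈ m := by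
        intro x hx
        have h := hleft x hx
        simp only [hpreddef, dif_pos h]
        exact h.choose_spec
      set g : ℕ → V := iterStop pred B v with hgdef
      have hg0 : g 0 = v := rfl
      have hgs : ∀ i, g i ∉ B → g (i+1) = pred (g i) := by
        intro i hi
        simp only [hgdef, iterStop, if_neg hi]
        exact if_neg hi
      have hgstep : ∀ i, g i ∉ B → (g i, g (i+1)) ∈ m := by
        intro i hi
        rw [hgs i hi]
        exact hpred _ hi
      have hghit : ∃ n, g n ∈ B := by
        by_contra hno
        push_neg at hno
        have hginj : ∀ i j : ℕ, g i = g j → i = j := by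
          intro i
          induction i with
          | zero =>
            intro j he
            cases j with
            | zero => rfl
            | succ j' =>
              exfalso
              have hst := hgstep j' (hno j')
              rw [← he] at hst
              exact hnotsnd (g 0) hv _ hst
          | succ i' ih =>
            intro j he
            cases j with
            | zero =>
              exfalso
              have hst := hgstep i' (hno i')
              rw [he] at hst
              exact hnotsnd (g 0) hv _ hst
            | succ j' =>
              have h1 := hgstep i' (hno i')
              have h2 := hgstep j' (hno j')
              rw [he] at h1
              rw [ih j' (hm2 h1 h2)]
        have hreach : ∀ i, Relation.ReflTransGen (bipStep (starM0 B0 ∪ m))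
            (Sum.inl v) (Sum.inl (g i)) := by
          intro i
          induction i with
          | zero => exact .refl
          | succ i ih =>
            have h1 : bipStep (starM0 B0 ∪ m) (Sum.inl (g i)) (Sum.inr (g (i+1))) :=
              Or.inr (hgstep i (hno i))
            have hB0' : g (i+1) ∉ B0 := (hmE _ _ (hgstep i (hno i))).2
            have h2 : bipStep (starM0 B0 ∪ m) (Sum.inr (g (i+1))) (Sum.inl (g (i+1))) :=
              Or.inl ⟨rfl, hB0'⟩
            exact (ih.tail h1).tail h2
        have hinf : {y | Relation.ReflTransGen (bipStep (starM0 B0 ∪ m))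
            (Sum.inl v) y}.Infinite := by
          apply Set.infinite_of_injective_forall_mem
            (f := fun i : ℕ => (Sum.inl (g i) : V ⊕ V))
          · intro i j he
            simp only [Sum.inl.injEq] at he
            exact hginj i j he
          · exact fun i => hreach i
        exact hinf (hcomp (Sum.inl v))
      set n : ℕ := Nat.find hghit with hndef
      have hgn : g n ∈ B := Nat.find_spec hghit
      have hgmin : ∀ t, t < n → g t ∉ B := fun t ht => Nat.find_min hghit ht
      have hgB0 : ∀ j, 1 ≤ j → j ≤ n → g j ∉ B0 := by
        intro j h1 h2
        cases j with
        | zero => omega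
        | succ j' =>
          exact (hmE _ _ (hgstep j' (hgmin j' (by omega)))).2
      have hfb : ∀ i, i ≤ n → f (g n) i = g (n - i) := by
        intro i
        induction i with
        | zero => intro _; rfl
        | succ i ih =>
          intro hin
          have h1 := ih (by omega)
          have hni : f (g n) i ∉ B0 := by
            rw [h1]
            exact hgB0 (n - i) (by omega) (by omega)
          have hstep := hfstep (g n) i hni
          rw [h1] at hstep
          have hstep2 : (g (n - i - 1), g (n - i)) ∈ m := by
            have := hgstep (n - i - 1) (hgmin _ (by omega))
            rwa [show n - i - 1 + 1 = n - i by omega] at this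
          rw [hm2 hstep hstep2, show n - i - 1 = n - (i+1) by omega]
      have hfn : f (g n) n = v := by
        rw [hfb n le_rfl, Nat.sub_self, hg0]
      have hfi : ∀ i, i < n → f (g n) i ∉ B0 := by
        intro i hi
        rw [hfb i (le_of_lt hi)]
        exact hgB0 (n - i) (by omega) (by omega)
      have hnbn : nb (g n) = n := by
        have hle : nb (g n) ≤ n := by
          by_contra hlt
          push_neg at hlt
          exact hnb2 _ hgn n hlt (hfn ▸ hv)
        have hge : n ≤ nb (g n) := by
          by_contra hlt
          push_neg at hlt
          exact hfi _ hlt (hnb1 _ hgn)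
        omega
      refine ⟨wb (g n), ⟨g n, hgn, rfl⟩, hnotray _, ?_⟩
      rw [hter _ hgn, hnbn]
      exact hfn

end Aux2

theorem linkable_onto_iff_m0_matchable_onto {V : Type*} (D : V → V → Prop) (B0 : Set V)
    (hDim : IsDimaze D B0) (B : Set V) :
    LinkableOnto D B0 B ↔
      M0MatchableOnto (starEdges D B0) (starM0 B0) (Set.univ \ B) {v | v ∉ B0} :=
  ⟨forward_dir D B0 hDim B, backward_dir D B0 B⟩
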